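/- For every integer r ≥ 1 and real C ≥ 0 there is a constant β (depending only on r and C) with the following property. Let 𝔽 be a field, let Π_0 ⊊ Π_1 be linear subspaces of 𝔽^d with dim Π_0 = k and dim Π_1 = k + r, let Δ be the set of lines through the origin contained in Π_1 but not contained in Π_0, and let f : L_0 → [0,∞) be finitely supported, where L_0 is the set of lines through the origin in 𝔽^d. Suppose that for every linear subspace π with Π_0 ⊊ π ⊊ Π_1 one has Σ_{l ⊆ π, l ⊄ Π_0} f(l) ≤ C · Σ_{l ⊆ Π_1, l ⊄ π} f(l). Then (Σ_{l∈Δ} f(l))^r ≤ β · Σ_{(l_1,…,l_r)∈Δ^r} δ_{Π_0,Π_1}(l_1,…,l_r) f(l_1)⋯f(l_r), where δ_{Π_0,Π_1}(l_1,…,l_r) = 1 if the span of Π_0 together with l_1, …, l_r has dimension k + r, and 0 otherwise. -/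

import Mathlib

/- STATEMENT 9: Lemma 2 (`lemma:concl`) of the paper, in the normalized form of
   inequality (eq:to_prove): under the lightness condition for all intermediate
   subspaces, the mass of f on Δ to the r-th power is controlled by the sum over
   generic (spanning) r-tuples. -/

open scoped NNReal ENNReal

/-- A line through the origin in `𝔽^d`: a one-dimensional linear subspace. -/
def LineO (𝔽 : Type*) [Field 𝔽] (d : ℕ) : Type _ :=
  {W : Submodule 𝔽 (Fin d → 𝔽) // Module.finrank 𝔽 W = 1}

/-- Comparison of tsums over subtypes when one predicate implies the other. -/
lemma tsum_subtype_mono {α : Type*} (g : α → ℝ≥0∞) {p q : α → Prop}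
    (h : ∀ a, p a → q a) :
    ∑' x : {a // p a}, g x.1 ≤ ∑' x : {a // q a}, g x.1 := by
  have hinj : Function.Injective
      (fun x : {a // p a} => (⟨x.1, h x.1 x.2⟩ : {a // q a})) := by
    intro x y hxy
    simpa [Subtype.ext_iff] using hxy
  exact ENNReal.tsum_comp_le_tsum_of_injective hinj (fun x => g x.1)

lemma tsum_subtype_eq_indicator {α : Type*} (g : α → ℝ≥0∞) (p : α → Prop) :
    ∑' x : {a // p a}, g x.1 = ∑' x, Set.indicator {a | p a} g x :=
  tsum_subtype {a | p a} g

/-- Adding a line not contained in `P` to `P` increases the dimension by one. -/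
lemma finrank_sup_line {𝔽 V : Type*} [Field 𝔽] [AddCommGroup V] [Module 𝔽 V]
    [FiniteDimensional 𝔽 V] {P l : Submodule 𝔽 V} (hl : Module.finrank 𝔽 l = 1)
    (hnle : ¬ l ≤ P) : Module.finrank 𝔽 ↥(P ⊔ l) = Module.finrank 𝔽 P + 1 := by
  have hinf : P ⊓ l = ⊥ := by
    have hlt : P ⊓ l < l := lt_of_le_of_ne inf_le_right (fun h => hnle (h ▸ inf_le_left))
    have h2 := Submodule.finrank_lt_finrank_of_lt hlt
    rw [hl] at h2
    have h0 : Module.finrank 𝔽 ↥(P ⊓ l) = 0 := by omega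
    exact (Submodule.finrank_eq_zero).1 h0
  have key := Submodule.finrank_sup_add_finrank_inf_eq P l
  rw [hinf, hl] at key
  simpa using key

lemma iSup_fin_succ {α : Type*} [CompleteLattice α] {n : ℕ} (h : Fin (n + 1) → α) :
    (⨆ i, h i) = h 0 ⊔ ⨆ i : Fin n, h i.succ := by
  apply le_antisymm
  · exact iSup_le (Fin.cases le_sup_left fun i =>
      le_sup_of_le_right (le_iSup (fun i : Fin n => h i.succ) i))
  · exact sup_le (le_iSup h 0) (iSup_le fun i => le_iSup h i.succ)

theorem mass_controlled_by_generic_tuples (r : ℕ) (hr : 1 ≤ r) (C : ℝ≥0) :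
    ∃ β : ℝ≥0,
      ∀ (𝔽 : Type*) [Field 𝔽] (d k : ℕ)
        (P₀ P₁ : Submodule 𝔽 (Fin d → 𝔽)), P₀ < P₁ →
        Module.finrank 𝔽 P₀ = k → Module.finrank 𝔽 P₁ = k + r →
        ∀ f : LineO 𝔽 d → ℝ≥0, (Function.support f).Finite →
        -- the lightness hypothesis for every intermediate subspace π
        (∀ π : Submodule 𝔽 (Fin d → 𝔽), P₀ < π → π < P₁ →
          (∑' l : {l : LineO 𝔽 d // l.1 ≤ π ∧ ¬ l.1 ≤ P₀}, (f l.1 : ℝ≥0∞)) ≤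
            (C : ℝ≥0∞) *
              ∑' l : {l : LineO 𝔽 d // l.1 ≤ P₁ ∧ ¬ l.1 ≤ π}, (f l.1 : ℝ≥0∞)) →
        -- conclusion: (Σ_{l ∈ Δ} f(l))^r ≤ β Σ_{(l₁,…,l_r) spanning} f(l₁)⋯f(l_r)
        (∑' l : {l : LineO 𝔽 d // l.1 ≤ P₁ ∧ ¬ l.1 ≤ P₀}, (f l.1 : ℝ≥0∞)) ^ r ≤
          (β : ℝ≥0∞) *
            ∑' t : {t : Fin r → LineO 𝔽 d //
                (∀ i, (t i).1 ≤ P₁ ∧ ¬ (t i).1 ≤ P₀) ∧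
                Module.finrank 𝔽 ↥(P₀ ⊔ ⨆ i, (t i).1) = k + r},
              ∏ i, (f (t.1 i) : ℝ≥0∞) := by
  induction r, hr using Nat.le_induction with
  | base =>
    refine ⟨1, ?_⟩
    intro 𝔽 _ d k P₀ P₁ hlt hk0 hk1 f hfin hlight
    rw [pow_one, ENNReal.coe_one, one_mul]
    set g : LineO 𝔽 d → ℝ≥0∞ := fun l => (f l : ℝ≥0∞) with hg
    have hmem : ∀ l : {l : LineO 𝔽 d // l.1 ≤ P₁ ∧ ¬ l.1 ≤ P₀},
        (∀ i : Fin 1, ((fun _ => l.1) i).1 ≤ P₁ ∧ ¬ ((fun _ => l.1) i).1 ≤ P₀) ∧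
        Module.finrank 𝔽 ↥(P₀ ⊔ ⨆ i : Fin 1, ((fun _ => l.1) i).1) = k + 1 := by
      intro l
      refine ⟨fun _ => l.2, ?_⟩
      rw [iSup_const, finrank_sup_line l.1.2 l.2.2, hk0]
    set E : {l : LineO 𝔽 d // l.1 ≤ P₁ ∧ ¬ l.1 ≤ P₀} →
        {t : Fin 1 → LineO 𝔽 d //
          (∀ i, (t i).1 ≤ P₁ ∧ ¬ (t i).1 ≤ P₀) ∧
          Module.finrank 𝔽 ↥(P₀ ⊔ ⨆ i, (t i).1) = k + 1} :=
      fun l => ⟨fun _ => l.1, hmem l⟩ with hE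
    have hinj : Function.Injective E := by
      intro x y hxy
      rw [hE] at hxy
      simp only [Subtype.mk.injEq] at hxy
      exact Subtype.ext (congrFun hxy 0)
    have hle := ENNReal.tsum_comp_le_tsum_of_injective hinj
      (fun t : {t : Fin 1 → LineO 𝔽 d //
          (∀ i, (t i).1 ≤ P₁ ∧ ¬ (t i).1 ≤ P₀) ∧
          Module.finrank 𝔽 ↥(P₀ ⊔ ⨆ i, (t i).1) = k + 1} => ∏ i, g (t.1 i))
    refine le_trans (le_of_eq (tsum_congr fun l => ?_)) hle
    simp [hE, hg, Fin.prod_univ_one]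
  | succ r hr ih =>
    obtain ⟨β, hβ⟩ := ih
    refine ⟨(C + 1) ^ r * β, ?_⟩
    intro 𝔽 _ d k P₀ P₁ hlt hk0 hk1 f hfin hlight
    rw [ENNReal.coe_mul, ENNReal.coe_pow, ENNReal.coe_add, ENNReal.coe_one]
    set g : LineO 𝔽 d → ℝ≥0∞ := fun l => (f l : ℝ≥0∞) with hg
    set S : ℝ≥0∞ := ∑' l : {l : LineO 𝔽 d // l.1 ≤ P₁ ∧ ¬ l.1 ≤ P₀}, g l.1 with hS
    have hπk : ∀ l₁ : {l : LineO 𝔽 d // l.1 ≤ P₁ ∧ ¬ l.1 ≤ P₀},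
        Module.finrank 𝔽 ↥(P₀ ⊔ l₁.1.1) = k + 1 := by
      intro l₁
      rw [finrank_sup_line l₁.1.2 l₁.2.2, hk0]
    have hπle : ∀ l₁ : {l : LineO 𝔽 d // l.1 ≤ P₁ ∧ ¬ l.1 ≤ P₀},
        P₀ ⊔ l₁.1.1 ≤ P₁ := fun l₁ => sup_le hlt.le l₁.2.1
    have hπlt : ∀ l₁ : {l : LineO 𝔽 d // l.1 ≤ P₁ ∧ ¬ l.1 ≤ P₀},
        P₀ ⊔ l₁.1.1 < P₁ := by
      intro l₁
      refine Submodule.lt_of_le_of_finrank_lt_finrank (hπle l₁) ?_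
      rw [hπk l₁, hk1]; omega
    have hP₀π : ∀ l₁ : {l : LineO 𝔽 d // l.1 ≤ P₁ ∧ ¬ l.1 ≤ P₀},
        P₀ < P₀ ⊔ l₁.1.1 := by
      intro l₁
      exact lt_of_le_of_ne le_sup_left (fun h => l₁.2.2 (le_sup_right.trans h.ge))
    -- Step 1: S ≤ (C+1) * T l₁
    have key1 : ∀ l₁ : {l : LineO 𝔽 d // l.1 ≤ P₁ ∧ ¬ l.1 ≤ P₀},
        S ≤ ((C : ℝ≥0∞) + 1) *
          ∑' l : {l : LineO 𝔽 d // l.1 ≤ P₁ ∧ ¬ l.1 ≤ P₀ ⊔ l₁.1.1}, g l.1 := by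
      intro l₁
      have hsplit : S ≤ (∑' l : {l : LineO 𝔽 d // l.1 ≤ P₀ ⊔ l₁.1.1 ∧ ¬ l.1 ≤ P₀},
            g l.1) +
          ∑' l : {l : LineO 𝔽 d // l.1 ≤ P₁ ∧ ¬ l.1 ≤ P₀ ⊔ l₁.1.1}, g l.1 := by
        rw [hS, tsum_subtype_eq_indicator g, tsum_subtype_eq_indicator g,
          tsum_subtype_eq_indicator g, ← ENNReal.tsum_add]
        refine ENNReal.tsum_le_tsum fun x => ?_
        by_cases hp : x ∈ {a : LineO 𝔽 d | a.1 ≤ P₁ ∧ ¬ a.1 ≤ P₀}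
        · by_cases hq : x.1 ≤ P₀ ⊔ l₁.1.1
          · have hx1 : x ∈ {a : LineO 𝔽 d | a.1 ≤ P₀ ⊔ l₁.1.1 ∧ ¬ a.1 ≤ P₀} := ⟨hq, hp.2⟩
            calc Set.indicator {a : LineO 𝔽 d | a.1 ≤ P₁ ∧ ¬ a.1 ≤ P₀} g x ≤ g x :=
                  Set.indicator_le_self _ _ x
              _ ≤ _ := by
                  rw [Set.indicator_of_mem hx1]
                  exact le_self_add
          · have hx2 : x ∈ {a : LineO 𝔽 d | a.1 ≤ P₁ ∧ ¬ a.1 ≤ P₀ ⊔ l₁.1.1} :=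
              ⟨hp.1, hq⟩
            calc Set.indicator {a : LineO 𝔽 d | a.1 ≤ P₁ ∧ ¬ a.1 ≤ P₀} g x ≤ g x :=
                  Set.indicator_le_self _ _ x
              _ ≤ _ := by
                  rw [Set.indicator_of_mem hx2]
                  exact le_add_self
        · rw [Set.indicator_of_notMem hp]
          exact zero_le
      refine hsplit.trans ?_
      have hA := hlight (P₀ ⊔ l₁.1.1) (hP₀π l₁) (hπlt l₁)
      calc (∑' l : {l : LineO 𝔽 d // l.1 ≤ P₀ ⊔ l₁.1.1 ∧ ¬ l.1 ≤ P₀}, g l.1) +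
            ∑' l : {l : LineO 𝔽 d // l.1 ≤ P₁ ∧ ¬ l.1 ≤ P₀ ⊔ l₁.1.1}, g l.1
          ≤ (C : ℝ≥0∞) *
              (∑' l : {l : LineO 𝔽 d // l.1 ≤ P₁ ∧ ¬ l.1 ≤ P₀ ⊔ l₁.1.1}, g l.1) +
            ∑' l : {l : LineO 𝔽 d // l.1 ≤ P₁ ∧ ¬ l.1 ≤ P₀ ⊔ l₁.1.1}, g l.1 :=
            add_le_add hA le_rfl
        _ = ((C : ℝ≥0∞) + 1) *
              ∑' l : {l : LineO 𝔽 d // l.1 ≤ P₁ ∧ ¬ l.1 ≤ P₀ ⊔ l₁.1.1}, g l.1 := by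
            ring
    -- Step 2: apply the induction hypothesis with base π' = P₀ ⊔ l₁
    have key2 : ∀ l₁ : {l : LineO 𝔽 d // l.1 ≤ P₁ ∧ ¬ l.1 ≤ P₀},
        (∑' l : {l : LineO 𝔽 d // l.1 ≤ P₁ ∧ ¬ l.1 ≤ P₀ ⊔ l₁.1.1}, g l.1) ^ r ≤
          (β : ℝ≥0∞) *
          ∑' t : {t : Fin r → LineO 𝔽 d //
              (∀ i, (t i).1 ≤ P₁ ∧ ¬ (t i).1 ≤ P₀ ⊔ l₁.1.1) ∧
              Module.finrank 𝔽 ↥((P₀ ⊔ l₁.1.1) ⊔ ⨆ i, (t i).1) = (k + 1) + r},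
            ∏ i, g (t.1 i) := by
      intro l₁
      refine hβ 𝔽 d (k + 1) (P₀ ⊔ l₁.1.1) P₁ (hπlt l₁) (hπk l₁) (by omega) f hfin ?_
      intro π h1 h2
      refine le_trans (tsum_subtype_mono g ?_) (hlight π (lt_of_lt_of_le (hP₀π l₁) h1.le) h2)
      exact fun a ha => ⟨ha.1, fun hle => ha.2 (hle.trans le_sup_left)⟩
    -- Step 3: the map gluing in the first line, and its injectivity
    have hmem : ∀ (l₁ : {l : LineO 𝔽 d // l.1 ≤ P₁ ∧ ¬ l.1 ≤ P₀})
        (t : {t : Fin r → LineO 𝔽 d //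
              (∀ i, (t i).1 ≤ P₁ ∧ ¬ (t i).1 ≤ P₀ ⊔ l₁.1.1) ∧
              Module.finrank 𝔽 ↥((P₀ ⊔ l₁.1.1) ⊔ ⨆ i, (t i).1) = (k + 1) + r}),
        (∀ i, ((Fin.cons l₁.1 t.1 : Fin (r+1) → LineO 𝔽 d) i).1 ≤ P₁ ∧
          ¬ ((Fin.cons l₁.1 t.1 : Fin (r+1) → LineO 𝔽 d) i).1 ≤ P₀) ∧
        Module.finrank 𝔽
          ↥(P₀ ⊔ ⨆ i, ((Fin.cons l₁.1 t.1 : Fin (r+1) → LineO 𝔽 d) i).1) = k + (r + 1) := by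
      intro l₁ t
      constructor
      · intro i
        refine Fin.cases ?_ ?_ i
        · simpa using l₁.2
        · intro j
          simp only [Fin.cons_succ]
          exact ⟨(t.2.1 j).1, fun h => (t.2.1 j).2 (h.trans le_sup_left)⟩
      · have hsup : (⨆ i, ((Fin.cons l₁.1 t.1 : Fin (r+1) → LineO 𝔽 d) i).1) =
            l₁.1.1 ⊔ ⨆ i : Fin r, (t.1 i).1 := by
          rw [iSup_fin_succ]
          simp [Fin.cons_succ]
        rw [hsup, ← sup_assoc, t.2.2]
        omega
    set E : (Σ l₁ : {l : LineO 𝔽 d // l.1 ≤ P₁ ∧ ¬ l.1 ≤ P₀},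
          {t : Fin r → LineO 𝔽 d //
            (∀ i, (t i).1 ≤ P₁ ∧ ¬ (t i).1 ≤ P₀ ⊔ l₁.1.1) ∧
            Module.finrank 𝔽 ↥((P₀ ⊔ l₁.1.1) ⊔ ⨆ i, (t i).1) = (k + 1) + r}) →
        {t : Fin (r + 1) → LineO 𝔽 d //
          (∀ i, (t i).1 ≤ P₁ ∧ ¬ (t i).1 ≤ P₀) ∧
          Module.finrank 𝔽 ↥(P₀ ⊔ ⨆ i, (t i).1) = k + (r + 1)} :=
      fun p => ⟨Fin.cons p.1.1 p.2.1, hmem p.1 p.2⟩ with hE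
    have hEinj : Function.Injective E := by
      rintro ⟨⟨a, ha⟩, ⟨t, ht⟩⟩ ⟨⟨b, hb⟩, ⟨s, hs⟩⟩ h
      rw [hE] at h
      simp only [Subtype.mk.injEq, Fin.cons_inj] at h
      obtain ⟨hab, hts⟩ := h
      subst hab
      have hts' : t = s := hts
      subst hts'
      rfl
    calc S ^ (r + 1) = S * S ^ r := pow_succ' S r
      _ = ∑' l₁ : {l : LineO 𝔽 d // l.1 ≤ P₁ ∧ ¬ l.1 ≤ P₀}, g l₁.1 * S ^ r := by
          rw [hS, ENNReal.tsum_mul_right]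
      _ ≤ ∑' l₁ : {l : LineO 𝔽 d // l.1 ≤ P₁ ∧ ¬ l.1 ≤ P₀},
            (((C : ℝ≥0∞) + 1) ^ r * (β : ℝ≥0∞)) *
              (g l₁.1 * ∑' t : {t : Fin r → LineO 𝔽 d //
                  (∀ i, (t i).1 ≤ P₁ ∧ ¬ (t i).1 ≤ P₀ ⊔ l₁.1.1) ∧
                  Module.finrank 𝔽 ↥((P₀ ⊔ l₁.1.1) ⊔ ⨆ i, (t i).1) = (k + 1) + r},
                ∏ i, g (t.1 i)) := by
          refine ENNReal.tsum_le_tsum fun l₁ => ?_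
          have h1 : S ^ r ≤ (((C : ℝ≥0∞) + 1) *
              ∑' l : {l : LineO 𝔽 d // l.1 ≤ P₁ ∧ ¬ l.1 ≤ P₀ ⊔ l₁.1.1}, g l.1) ^ r := by
            gcongr
            exact key1 l₁
          have h2 : (((C : ℝ≥0∞) + 1) *
              ∑' l : {l : LineO 𝔽 d // l.1 ≤ P₁ ∧ ¬ l.1 ≤ P₀ ⊔ l₁.1.1}, g l.1) ^ r ≤
              ((C : ℝ≥0∞) + 1) ^ r * ((β : ℝ≥0∞) *
                ∑' t : {t : Fin r → LineO 𝔽 d //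
                  (∀ i, (t i).1 ≤ P₁ ∧ ¬ (t i).1 ≤ P₀ ⊔ l₁.1.1) ∧
                  Module.finrank 𝔽 ↥((P₀ ⊔ l₁.1.1) ⊔ ⨆ i, (t i).1) = (k + 1) + r},
                ∏ i, g (t.1 i)) := by
            rw [mul_pow]
            gcongr
            exact key2 l₁
          calc g l₁.1 * S ^ r
              ≤ g l₁.1 * (((C : ℝ≥0∞) + 1) ^ r * ((β : ℝ≥0∞) *
                  ∑' t : {t : Fin r → LineO 𝔽 d //
                    (∀ i, (t i).1 ≤ P₁ ∧ ¬ (t i).1 ≤ P₀ ⊔ l₁.1.1) ∧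
                    Module.finrank 𝔽 ↥((P₀ ⊔ l₁.1.1) ⊔ ⨆ i, (t i).1) = (k + 1) + r},
                  ∏ i, g (t.1 i))) := mul_le_mul_right (h1.trans h2) _
            _ = _ := by ring
      _ = (((C : ℝ≥0∞) + 1) ^ r * (β : ℝ≥0∞)) *
            ∑' l₁ : {l : LineO 𝔽 d // l.1 ≤ P₁ ∧ ¬ l.1 ≤ P₀},
              ∑' t : {t : Fin r → LineO 𝔽 d //
                  (∀ i, (t i).1 ≤ P₁ ∧ ¬ (t i).1 ≤ P₀ ⊔ l₁.1.1) ∧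
                  Module.finrank 𝔽 ↥((P₀ ⊔ l₁.1.1) ⊔ ⨆ i, (t i).1) = (k + 1) + r},
                g l₁.1 * ∏ i, g (t.1 i) := by
          rw [ENNReal.tsum_mul_left]
          congr 1
          exact tsum_congr fun l₁ => (ENNReal.tsum_mul_left).symm
      _ = (((C : ℝ≥0∞) + 1) ^ r * (β : ℝ≥0∞)) *
            ∑' p : (Σ l₁ : {l : LineO 𝔽 d // l.1 ≤ P₁ ∧ ¬ l.1 ≤ P₀},
                {t : Fin r → LineO 𝔽 d //
                  (∀ i, (t i).1 ≤ P₁ ∧ ¬ (t i).1 ≤ P₀ ⊔ l₁.1.1) ∧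
                  Module.finrank 𝔽 ↥((P₀ ⊔ l₁.1.1) ⊔ ⨆ i, (t i).1) = (k + 1) + r}),
              g p.1.1 * ∏ i, g (p.2.1 i) := by
          congr 1
          exact (ENNReal.tsum_sigma'
            (fun p : (Σ l₁ : {l : LineO 𝔽 d // l.1 ≤ P₁ ∧ ¬ l.1 ≤ P₀},
                {t : Fin r → LineO 𝔽 d //
                  (∀ i, (t i).1 ≤ P₁ ∧ ¬ (t i).1 ≤ P₀ ⊔ l₁.1.1) ∧
                  Module.finrank 𝔽 ↥((P₀ ⊔ l₁.1.1) ⊔ ⨆ i, (t i).1) = (k + 1) + r}) =>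
              g p.1.1 * ∏ i, g (p.2.1 i))).symm
      _ ≤ (((C : ℝ≥0∞) + 1) ^ r * (β : ℝ≥0∞)) *
            ∑' t : {t : Fin (r + 1) → LineO 𝔽 d //
                (∀ i, (t i).1 ≤ P₁ ∧ ¬ (t i).1 ≤ P₀) ∧
                Module.finrank 𝔽 ↥(P₀ ⊔ ⨆ i, (t i).1) = k + (r + 1)},
              ∏ i, g (t.1 i) := by
          refine mul_le_mul_right ?_ _
          have hcomp : ∀ p : (Σ l₁ : {l : LineO 𝔽 d // l.1 ≤ P₁ ∧ ¬ l.1 ≤ P₀},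
                {t : Fin r → LineO 𝔽 d //
                  (∀ i, (t i).1 ≤ P₁ ∧ ¬ (t i).1 ≤ P₀ ⊔ l₁.1.1) ∧
                  Module.finrank 𝔽 ↥((P₀ ⊔ l₁.1.1) ⊔ ⨆ i, (t i).1) = (k + 1) + r}),
              g p.1.1 * ∏ i, g (p.2.1 i) =
                (fun t : {t : Fin (r + 1) → LineO 𝔽 d //
                    (∀ i, (t i).1 ≤ P₁ ∧ ¬ (t i).1 ≤ P₀) ∧
                    Module.finrank 𝔽 ↥(P₀ ⊔ ⨆ i, (t i).1) = k + (r + 1)} =>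
                  ∏ i, g (t.1 i)) (E p) := by
            intro p
            rw [hE]
            simp only
            rw [Fin.prod_univ_succ]
            simp [Fin.cons_zero, Fin.cons_succ]
          rw [tsum_congr hcomp]
          exact ENNReal.tsum_comp_le_tsum_of_injective hEinj _
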